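/- Fix z ∈ {0,1}^n with m = Σ z_i treated units, y ∈ ℝ^n, 1 ≤ k ≤ n, and let l = min(n−k, m). Let I_k ⊆ {i : z_i = 1} be the set of treated indices with the l largest ranks r_i(y) (ties broken by 'first' method), and define ξ ∈ (ℝ ∪ {∞})^n by ξ_i = ∞ for i ∈ I_k and ξ_i = 0 otherwise. Then for any rank score statistic t(z, y) = Σ_i z_i φ(r_i(y)) with φ monotone increasing, the infimum over δ ∈ H_{k,0} = {δ ∈ ℝ^n : δ_{(k)} ≤ 0} of t(z, y − z∘δ) equals t(z, y − z∘ξ), and this value equals Σ_{i=1}^l φ(i) + Σ_{p=1}^{m−l} φ(r_p + l), where r_1 < ... < r_m are the sorted treated ranks of y. -/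

import Mathlib

open Finset

/-- Rank with the "first" method for ties, for extended-real outcome vectors. -/
noncomputable def rankE (n : ℕ) (v : Fin n → EReal) (i : Fin n) : ℕ :=
  (Finset.univ.filter fun j => v j < v i).card +
  (Finset.univ.filter fun j => v j = v i ∧ j ≤ i).card

variable {n : ℕ}

/-- `Below v i j` : unit `j` is counted in the rank of unit `i` (value below, or tie with smaller index). -/
def Below (v : Fin n → EReal) (i j : Fin n) : Prop := v j < v i ∨ (v j = v i ∧ j ≤ i)

noncomputable instance (v : Fin n → EReal) (i j : Fin n) : Decidable (Below v i j) :=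
  Classical.dec _

lemma below_refl (v : Fin n → EReal) (i : Fin n) : Below v i i := Or.inr ⟨rfl, le_refl _⟩

lemma below_trans {v : Fin n → ℝ} : True := trivial

lemma Below.trans {v : Fin n → EReal} {i j k : Fin n} (h1 : Below v i j) (h2 : Below v j k) :
    Below v i k := by
  rcases h1 with h1 | ⟨e1, l1⟩ <;> rcases h2 with h2 | ⟨e2, l2⟩
  · exact Or.inl (h2.trans h1)
  · exact Or.inl (e2 ▸ h1)
  · exact Or.inl (lt_of_lt_of_eq h2 e1)
  · exact Or.inr ⟨e2.trans e1, l2.trans l1⟩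

lemma below_total (v : Fin n → EReal) (i j : Fin n) : Below v i j ∨ Below v j i := by
  rcases lt_trichotomy (v j) (v i) with h | h | h
  · exact Or.inl (Or.inl h)
  · rcases le_total j i with h' | h'
    · exact Or.inl (Or.inr ⟨h, h'⟩)
    · exact Or.inr (Or.inr ⟨h.symm, h'⟩)
  · exact Or.inr (Or.inl h)

lemma below_antisymm {v : Fin n → EReal} {i j : Fin n} (h1 : Below v i j) (h2 : Below v j i) :
    i = j := by
  rcases h1 with h1 | ⟨e1, l1⟩ <;> rcases h2 with h2 | ⟨e2, l2⟩
  · exact absurd (h1.trans h2) (lt_irrefl _)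
  · exact absurd (e2 ▸ h1) (lt_irrefl _)
  · exact absurd (e1 ▸ h2) (lt_irrefl _)
  · exact le_antisymm l2 l1

lemma rankE_eq (v : Fin n → EReal) (i : Fin n) :
    rankE n v i = (univ.filter (Below v i)).card := by
  classical
  have hsplit : (univ.filter (Below v i)) =
      (univ.filter fun j => v j < v i) ∪ (univ.filter fun j => v j = v i ∧ j ≤ i) := by
    ext x; simp [Below]
  have hdisj : Disjoint (univ.filter fun j => v j < v i)
      (univ.filter fun j => v j = v i ∧ j ≤ i) := by
    rw [Finset.disjoint_filter]
    rintro x - hlt ⟨he, -⟩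
    exact absurd (he ▸ hlt) (lt_irrefl _)
  rw [rankE, hsplit, Finset.card_union_of_disjoint hdisj]

lemma rank_subset {v : Fin n → EReal} {i j : Fin n} (h : Below v i j) :
    (univ.filter (Below v j)) ⊆ (univ.filter (Below v i)) := by
  intro x hx
  simp only [Finset.mem_filter, Finset.mem_univ, true_and] at hx ⊢
  exact h.trans hx

lemma rank_le_of_below {v : Fin n → EReal} {i j : Fin n} (h : Below v i j) :
    rankE n v j ≤ rankE n v i := by
  rw [rankE_eq, rankE_eq]; exact Finset.card_le_card (rank_subset h)

lemma rank_lt_iff {v : Fin n → EReal} {i j : Fin n} :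
    rankE n v i < rankE n v j ↔ ¬ Below v i j := by
  constructor
  · intro h hb
    exact absurd (rank_le_of_below hb) (not_le.mpr h)
  · intro h
    have hji : Below v j i := (below_total v i j).resolve_left h
    rw [rankE_eq, rankE_eq]
    apply Finset.card_lt_card
    constructor
    · exact rank_subset hji
    · intro hsub
      have : j ∈ univ.filter (Below v i) := hsub (by simp [below_refl])
      simp only [Finset.mem_filter] at this
      exact h this.2

lemma one_le_rank (v : Fin n → EReal) (i : Fin n) : 1 ≤ rankE n v i := by
  rw [rankE_eq]
  have : i ∈ univ.filter (Below v i) := by simp [below_refl]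
  exact Finset.card_pos.mpr ⟨i, this⟩ 

lemma rank_injective (v : Fin n → EReal) : Function.Injective (rankE n v) := by
  intro i j h
  by_contra hne
  rcases below_total v i j with hb | hb
  · have : ¬ Below v j i := fun h2 => hne (below_antisymm h2 hb).symm
    have := rank_lt_iff.mpr this; omega
  · have : ¬ Below v i j := fun h2 => hne (below_antisymm h2 hb)
    have := rank_lt_iff.mpr this; omega

/-- Real version of `Below`. -/
def BelowR (u : Fin n → ℝ) (i j : Fin n) : Prop := u j < u i ∨ (u j = u i ∧ j ≤ i)

noncomputable instance (u : Fin n → ℝ) (i j : Fin n) : Decidable (BelowR u i j) :=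
  Classical.dec _

lemma below_coe {u : Fin n → ℝ} {i j : Fin n} :
    Below (fun t => ((u t : EReal))) i j ↔ BelowR u i j := by
  unfold Below BelowR
  simp [EReal.coe_lt_coe_iff, EReal.coe_eq_coe_iff]


lemma sort_getD_lt (S : Finset ℕ) {p q : ℕ} (hpq : p < q) (hq : q < S.card) :
    (Finset.sort S (·≤·)).getD p 0 < (Finset.sort S (·≤·)).getD q 0 := by
  have hlen : (Finset.sort S (·≤·)).length = S.card := Finset.length_sort _
  have hq' : q < (Finset.sort S (·≤·)).length := by omega
  have hp' : p < (Finset.sort S (·≤·)).length := by omega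
  rw [List.getD_eq_get (d := 0) (i := ⟨p, hp'⟩), List.getD_eq_get (d := 0) (i := ⟨q, hq'⟩)]
  exact List.Pairwise.rel_get_of_lt (S.sortedLT_sort.pairwise) hpq

lemma sort_getD_mono (S : Finset ℕ) {p q : ℕ} (hpq : p ≤ q) (hq : q < S.card) :
    (Finset.sort S (·≤·)).getD p 0 ≤ (Finset.sort S (·≤·)).getD q 0 := by
  rcases eq_or_lt_of_le hpq with rfl | h
  · exact le_refl _
  · exact (sort_getD_lt S h hq).le

lemma sort_getD_gap (S : Finset ℕ) {p q : ℕ} (hpq : p ≤ q) (hq : q < S.card) :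
    (Finset.sort S (·≤·)).getD p 0 + (q - p) ≤ (Finset.sort S (·≤·)).getD q 0 := by
  obtain ⟨t, rfl⟩ := Nat.exists_eq_add_of_le hpq
  induction t with
  | zero => simp
  | succ t ih =>
    have h1 : (Finset.sort S (·≤·)).getD (p + t) 0 < (Finset.sort S (·≤·)).getD (p + (t+1)) 0 :=
      sort_getD_lt S (by omega) hq
    have h2 := ih (by omega) (by omega)
    omega

lemma sort_getD_mem (S : Finset ℕ) {q : ℕ} (hq : q < S.card) :
    (Finset.sort S (·≤·)).getD q 0 ∈ S := by
  have hq' : q < (Finset.sort S (·≤·)).length := by rw [Finset.length_sort]; omega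
  rw [List.getD_eq_get (d := 0) (i := ⟨q, hq'⟩)]
  have hmem : (Finset.sort S (·≤·)).get ⟨q, hq'⟩ ∈ Finset.sort S (·≤·) := List.get_mem _ _
  exact (Finset.mem_sort _).mp hmem

lemma sort_getD_le_iff (S : Finset ℕ) {q : ℕ} (hq : q < S.card) (c : ℕ) :
    (Finset.sort S (·≤·)).getD q 0 ≤ c ↔ q + 1 ≤ (S.filter (· ≤ c)).card := by
  have hlen : (Finset.sort S (·≤·)).length = S.card := Finset.length_sort _
  constructor
  · intro h1
    have : (Finset.range (q+1)).card ≤ (S.filter (· ≤ c)).card := by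
      apply Finset.card_le_card_of_injOn (fun p => (Finset.sort S (·≤·)).getD p 0)
      · intro p hp
        rw [Finset.mem_coe, Finset.mem_range] at hp
        have hp' : p < S.card := by omega
        rw [Finset.mem_coe, Finset.mem_filter]
        exact ⟨sort_getD_mem S hp', le_trans (sort_getD_mono S (by omega) hq) h1⟩
      · intro p hp p' hp' hne
        rw [Finset.mem_coe, Finset.mem_range] at hp hp'
        by_contra hpp
        rcases Nat.lt_or_ge p p' with h | h
        · exact absurd hne (Nat.ne_of_lt (sort_getD_lt S h (by omega)))
        · have : p' < p := by omega
          exact absurd hne.symm (Nat.ne_of_lt (sort_getD_lt S this (by omega)))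
    simpa using this
  · intro h1
    by_contra hc
    push_neg at hc
    have hsub : S.filter (· ≤ c) ⊆ (Finset.range q).image (fun p => (Finset.sort S (·≤·)).getD p 0) := by
      intro x hx
      rw [Finset.mem_filter] at hx
      have : x ∈ Finset.sort S (·≤·) := (Finset.mem_sort _).mpr hx.1
      obtain ⟨⟨i, hi⟩, hg⟩ := List.mem_iff_get.mp this
      have hgd : (Finset.sort S (·≤·)).getD i 0 = x := by
        rw [List.getD_eq_get (d := 0) (i := ⟨i, hi⟩), hg]
      rcases Nat.lt_or_ge i q with h | h
      · exact Finset.mem_image.mpr ⟨i, Finset.mem_range.mpr h, hgd⟩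
      · exfalso
        have := sort_getD_mono S h (by omega)
        omega
    have := Finset.card_le_card hsub
    have := Finset.card_image_le (s := Finset.range q) (f := fun p => (Finset.sort S (·≤·)).getD p 0)
    simp only [Finset.card_range] at this
    omega

lemma card_filter_split (P : Fin n → Prop) [DecidablePred P] (Ik : Finset (Fin n)) :
    (univ.filter P).card =
      (univ.filter (fun j => j ∈ Ik ∧ P j)).card + (univ.filter (fun j => j ∉ Ik ∧ P j)).card := by
  classical
  rw [← Finset.card_union_of_disjoint]
  · congr 1
    ext j
    by_cases h : j ∈ Ik <;> simp [h]
  · rw [Finset.disjoint_filter]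
    rintro x - ⟨h1, -⟩ ⟨h2, -⟩
    exact h2 h1

section PartB

variable {T Ik : Finset (Fin n)} {y : Fin n → ℝ}

lemma rankw_mem_Ik (hIkT : Ik ⊆ T) {i : Fin n} (hi : i ∈ Ik) :
    rankE n (fun j => if j ∈ Ik then (⊥ : EReal) else (y j : EReal)) i
      = (Ik.filter (· ≤ i)).card := by
  classical
  rw [rankE_eq]
  congr 1
  ext j
  simp only [Finset.mem_filter, Finset.mem_univ, true_and]
  unfold Below
  simp only [if_pos hi]
  by_cases hj : j ∈ Ik
  · simp [hj, hi]
  · simp only [if_neg hj]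
    constructor
    · rintro (h | ⟨h, -⟩)
      · exact absurd h (by simp)
      · exact absurd h (EReal.coe_ne_bot _)
    · rintro ⟨h, -⟩; exact absurd h hj

lemma sum_Ik (φ : ℕ → ℝ) :
    ∑ i ∈ Ik, φ ((Ik.filter (· ≤ i)).card) = ∑ t ∈ Finset.Icc 1 Ik.card, φ t := by
  classical
  set g : Fin n → ℕ := fun i => (Ik.filter (· ≤ i)).card with hg
  have hmono : ∀ i ∈ Ik, ∀ i' ∈ Ik, i < i' → g i < g i' := by
    intro i hi i' hi' hlt
    apply Finset.card_lt_card
    constructor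
    · intro x hx
      rw [Finset.mem_filter] at hx ⊢
      exact ⟨hx.1, hx.2.trans hlt.le⟩
    · intro hsub
      have : i' ∈ Ik.filter (· ≤ i') := by simp [hi']
      have h2 := hsub this
      rw [Finset.mem_filter] at h2
      exact absurd h2.2 (not_le.mpr hlt)
  have hinj : ∀ i ∈ Ik, ∀ i' ∈ Ik, g i = g i' → i = i' := by
    intro i hi i' hi' he
    rcases lt_trichotomy i i' with h | h | h
    · exact absurd he (Nat.ne_of_lt (hmono i hi i' hi' h))
    · exact h
    · exact absurd he.symm (Nat.ne_of_lt (hmono i' hi' i hi h))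
  have himg : Ik.image g = Finset.Icc 1 Ik.card := by
    apply Finset.eq_of_subset_of_card_le
    · intro x hx
      rw [Finset.mem_image] at hx
      obtain ⟨i, hi, rfl⟩ := hx
      rw [Finset.mem_Icc]
      constructor
      · exact Finset.card_pos.mpr ⟨i, by simp [hi]⟩
      · exact Finset.card_le_card (Finset.filter_subset _ _)
    · rw [Nat.card_Icc, Finset.card_image_of_injOn hinj]
      omega
  rw [← himg, Finset.sum_image hinj]

lemma rankw_not_mem_Ik (hIkT : Ik ⊆ T)
    (hIktop : ∀ i ∈ Ik, ∀ j ∈ T \ Ik,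
      rankE n (fun i => ((y i : EReal))) j < rankE n (fun i => ((y i : EReal))) i)
    {i : Fin n} (hiT : i ∈ T) (hi : i ∉ Ik) :
    rankE n (fun j => if j ∈ Ik then (⊥ : EReal) else (y j : EReal)) i
      = rankE n (fun i => ((y i : EReal))) i + Ik.card := by
  classical
  set w : Fin n → EReal := fun j => if j ∈ Ik then (⊥ : EReal) else (y j : EReal) with hw
  set vy : Fin n → EReal := fun j => ((y j : EReal)) with hvy
  rw [rankE_eq, rankE_eq]
  rw [card_filter_split (Below w i) Ik, card_filter_split (Below vy i) Ik]
  have h1 : univ.filter (fun j => j ∈ Ik ∧ Below w i j) = Ik := by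
    ext j
    simp only [Finset.mem_filter, Finset.mem_univ, true_and]
    constructor
    · exact fun h => h.1
    · intro hj
      refine ⟨hj, Or.inl ?_⟩
      show w j < w i
      rw [hw]
      simp only [if_pos hj, if_neg hi]
      exact EReal.bot_lt_coe _
  have h2 : univ.filter (fun j => j ∈ Ik ∧ Below vy i j) = ∅ := by
    ext j
    simp only [Finset.mem_filter, Finset.mem_univ, true_and, Finset.notMem_empty, iff_false]
    rintro ⟨hj, hb⟩
    have := hIktop j hj i (Finset.mem_sdiff.mpr ⟨hiT, hi⟩)
    rw [rank_lt_iff] at this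
    exact this hb
  have h3 : univ.filter (fun j => j ∉ Ik ∧ Below w i j)
      = univ.filter (fun j => j ∉ Ik ∧ Below vy i j) := by
    ext j
    simp only [Finset.mem_filter, Finset.mem_univ, true_and]
    constructor
    · rintro ⟨hj, hb⟩
      refine ⟨hj, ?_⟩
      unfold Below at hb ⊢
      rw [hw] at hb
      simp only [if_neg hj, if_neg hi] at hb
      exact hb
    · rintro ⟨hj, hb⟩
      refine ⟨hj, ?_⟩
      unfold Below at hb ⊢
      rw [hw]
      simp only [if_neg hj, if_neg hi]
      exact hb
  rw [h1, h2, h3]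
  simp [Nat.add_comm]

set_option maxHeartbeats 1000000 in
lemma sum_offIk (φ : ℕ → ℝ) (hIkT : Ik ⊆ T)
    (hIktop : ∀ i ∈ Ik, ∀ j ∈ T \ Ik,
      rankE n (fun i => ((y i : EReal))) j < rankE n (fun i => ((y i : EReal))) i) :
    ∑ i ∈ T \ Ik, φ (rankE n (fun i => ((y i : EReal))) i + Ik.card)
      = ∑ p ∈ Finset.range (T.card - Ik.card),
          φ ((Finset.sort (T.image (rankE n (fun i => ((y i : EReal))))) (· ≤ ·)).getD p 0
              + Ik.card) := by
  classical
  set Ry : Fin n → ℕ := rankE n (fun i => ((y i : EReal))) with hRy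
  set S : Finset ℕ := T.image Ry with hS
  set L : List ℕ := Finset.sort S (· ≤ ·) with hL
  have hRyInj : Function.Injective Ry := rank_injective _
  have hScard : S.card = T.card := Finset.card_image_of_injective _ hRyInj
  have hsub : (T \ Ik).card = T.card - Ik.card := Finset.card_sdiff_of_subset hIkT
  have hGcard : ((T \ Ik).image Ry).card = T.card - Ik.card := by
    rw [Finset.card_image_of_injective _ hRyInj, hsub]
  have hIle : Ik.card ≤ T.card := Finset.card_le_card hIkT
  -- each of the first (T.card - Ik.card) sorted entries belongs to (T\Ik).image Ry
  have hC1 : ∀ p < T.card - Ik.card, L.getD p 0 ∈ (T \ Ik).image Ry := by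
    intro p hp
    have hpS : p < S.card := by omega
    have hmem : L.getD p 0 ∈ S := sort_getD_mem S hpS
    rw [hS, Finset.mem_image] at hmem
    obtain ⟨i0, hi0T, hi0⟩ := hmem
    by_cases hi0Ik : i0 ∈ Ik
    · exfalso
      -- all T.card - Ik.card elements of (T\Ik).image Ry are < Ry i0
      have hlt : ∀ x ∈ (T \ Ik).image Ry, x ≤ Ry i0 - 1 := by
        intro x hx
        rw [Finset.mem_image] at hx
        obtain ⟨j, hj, rfl⟩ := hx
        have := hIktop i0 hi0Ik j hj
        omega
      have hsubf : (T \ Ik).image Ry ⊆ S.filter (· ≤ Ry i0 - 1) := by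
        intro x hx
        rw [Finset.mem_filter]
        refine ⟨?_, hlt x hx⟩
        rw [Finset.mem_image] at hx ⊢
        obtain ⟨j, hj, rfl⟩ := hx
        exact ⟨j, (Finset.mem_sdiff.mp hj).1, rfl⟩
      have hcard := Finset.card_le_card hsubf
      rw [hGcard] at hcard
      have hq : T.card - Ik.card - 1 < S.card := by omega
      have := (sort_getD_le_iff S hq (Ry i0 - 1)).mpr (by omega)
      have hmono := sort_getD_mono S (p := p) (q := T.card - Ik.card - 1) (by omega) hq
      have h1 : 1 ≤ Ry i0 := one_le_rank _ _
      rw [← hL] at this hmono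
      omega
    · exact Finset.mem_image.mpr ⟨i0, Finset.mem_sdiff.mpr ⟨hi0T, hi0Ik⟩, hi0⟩
  have hinjOn : ∀ p ∈ Finset.range (T.card - Ik.card), ∀ p' ∈ Finset.range (T.card - Ik.card),
      L.getD p 0 = L.getD p' 0 → p = p' := by
    intro p hp p' hp' he
    rw [Finset.mem_range] at hp hp'
    rcases lt_trichotomy p p' with h | h | h
    · exact absurd he (Nat.ne_of_lt (sort_getD_lt S h (by omega)))
    · exact h
    · exact absurd he.symm (Nat.ne_of_lt (sort_getD_lt S h (by omega)))
  have himg : (Finset.range (T.card - Ik.card)).image (fun p => L.getD p 0)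
      = (T \ Ik).image Ry := by
    apply Finset.eq_of_subset_of_card_le
    · intro x hx
      rw [Finset.mem_image] at hx
      obtain ⟨p, hp, rfl⟩ := hx
      exact hC1 p (Finset.mem_range.mp hp)
    · rw [hGcard, Finset.card_image_of_injOn hinjOn, Finset.card_range]
  have hinjT : ∀ i ∈ T \ Ik, ∀ i' ∈ T \ Ik, Ry i = Ry i' → i = i' :=
    fun i _ i' _ h => hRyInj h
  calc ∑ i ∈ T \ Ik, φ (Ry i + Ik.card)
      = ∑ x ∈ (T \ Ik).image Ry, φ (x + Ik.card) := by rw [Finset.sum_image hinjT]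
    _ = ∑ x ∈ (Finset.range (T.card - Ik.card)).image (fun p => L.getD p 0),
          φ (x + Ik.card) := by rw [himg]
    _ = ∑ p ∈ Finset.range (T.card - Ik.card), φ (L.getD p 0 + Ik.card) := by
        rw [Finset.sum_image hinjOn]

end PartB

section LowerBound

lemma below_iff_rank_le {v : Fin n → EReal} {i j : Fin n} :
    Below v i j ↔ rankE n v j ≤ rankE n v i := by
  constructor
  · intro h
    exact rank_le_of_below h
  · intro h
    by_contra hb
    exact absurd h (not_le.mpr (rank_lt_iff.mpr hb))

lemma rank_eq_card_rank_le (v : Fin n → EReal) (i : Fin n) :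
    rankE n v i = (univ.filter (fun j => rankE n v j ≤ rankE n v i)).card := by
  classical
  conv_lhs => rw [rankE_eq]
  congr 1
  ext j
  simp only [Finset.mem_filter, Finset.mem_univ, true_and]
  exact below_iff_rank_le

lemma below_real_shift {u : Fin n → ℝ} {y : Fin n → ℝ} {i j : Fin n}
    (hj : u j = y j) (hi : y i ≤ u i) (h : BelowR y i j) : BelowR u i j := by
  unfold BelowR at h ⊢
  rw [hj]
  rcases h with h | ⟨he, hle⟩
  · exact Or.inl (lt_of_lt_of_le h hi)
  · rcases lt_or_eq_of_le hi with h' | h'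
    · exact Or.inl (he ▸ h')
    · exact Or.inr ⟨he.trans h', hle⟩

lemma card_filter_rank_le (T : Finset (Fin n)) (v : Fin n → EReal) (c : ℕ) :
    ((T.image (rankE n v)).filter (· ≤ c)).card
      = (T.filter (fun i => rankE n v i ≤ c)).card := by
  classical
  rw [Finset.filter_image]
  exact Finset.card_image_of_injOn (fun a _ b _ h => rank_injective v h)

/-- generic: a set of units whose `v`-ranks are `≤ c` has at most `c` elements. -/
lemma card_rank_le_le (T : Finset (Fin n)) (v : Fin n → EReal) (c : ℕ) :
    (T.filter (fun i => rankE n v i ≤ c)).card ≤ c := by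
  classical
  have h : (T.filter (fun i => rankE n v i ≤ c)).card ≤ (Finset.Icc 1 c).card := by
    apply Finset.card_le_card_of_injOn (rankE n v)
    · intro i hi
      rw [Finset.mem_coe, Finset.mem_filter] at hi
      exact Finset.mem_Icc.mpr ⟨one_le_rank v i, hi.2⟩
    · exact fun a _ b _ h => rank_injective v h
  rw [Nat.card_Icc] at h
  omega

end LowerBound

set_option maxHeartbeats 1000000 in
lemma count_W (k : ℕ) (T : Finset (Fin n)) (y δ : Fin n → ℝ)
    (hδ : (Finset.univ.filter fun i => 0 < δ i).card ≤ n - k) {p : ℕ}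
    (hp : p < T.card - min (n - k) T.card) :
    (T.filter (fun i => rankE n (fun j => (((y j - if j ∈ T then δ j else 0 : ℝ)) : EReal)) i
        ≤ (Finset.sort (T.image (rankE n (fun i => ((y i : EReal))))) (· ≤ ·)).getD p 0
          + min (n - k) T.card - 1)).card
      ≤ p + min (n - k) T.card := by
  classical
  set l : ℕ := min (n - k) T.card with hl
  set vR : Fin n → ℝ := fun j => y j - if j ∈ T then δ j else 0 with hvR
  set v : Fin n → EReal := fun j => ((vR j : EReal)) with hv
  set vy : Fin n → EReal := fun j => ((y j : EReal)) with hvy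
  set Rv : Fin n → ℕ := rankE n v with hRv
  set Ry : Fin n → ℕ := rankE n vy with hRyd
  set S : Finset ℕ := T.image Ry with hS
  have hScard : S.card = T.card := Finset.card_image_of_injective _ (rank_injective _)
  set r : List ℕ := Finset.sort S (· ≤ ·) with hr
  set c : ℕ := r.getD p 0 + l - 1 with hc
  have hpT : p < T.card := by omega
  have hrp1 : 1 ≤ r.getD p 0 := by
    have hmem : r.getD p 0 ∈ S := sort_getD_mem S (by omega)
    rw [hS, Finset.mem_image] at hmem
    obtain ⟨i0, -, h⟩ := hmem
    rw [← h]
    exact one_le_rank _ _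
  set D : Finset (Fin n) := T.filter (fun i => 0 < δ i) with hD
  have hDl : D.card ≤ l := by
    have h1 : D ⊆ Finset.univ.filter (fun i => 0 < δ i) := by
      intro x hx; rw [Finset.mem_filter] at hx ⊢; exact ⟨Finset.mem_univ x, hx.2⟩
    have h2 : D ⊆ T := Finset.filter_subset _ _
    have := Finset.card_le_card h1
    have := Finset.card_le_card h2
    omega
  set W : Finset (Fin n) := T.filter (fun i => Rv i ≤ c) with hW
  set WA : Finset (Fin n) := W \ D with hWA
  by_cases hne : WA.Nonempty
  swap
  · rw [Finset.not_nonempty_iff_eq_empty, hWA, Finset.sdiff_eq_empty_iff_subset] at hne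
    have := Finset.card_le_card hne
    omega
  obtain ⟨istar, histar, hmax⟩ := Finset.exists_max_image WA Ry hne
  have histarW : istar ∈ W := (Finset.mem_sdiff.mp histar).1
  have histarD : istar ∉ D := (Finset.mem_sdiff.mp histar).2
  have histarT : istar ∈ T := (Finset.mem_filter.mp histarW).1
  have histarc : Rv istar ≤ c := (Finset.mem_filter.mp histarW).2
  have hδistar : ¬ 0 < δ istar := by
    intro h
    exact histarD (Finset.mem_filter.mpr ⟨histarT, h⟩)
  set α : ℕ := (T.filter (fun j => Ry j ≤ Ry istar)).card with hα
  have hWAα : WA.card ≤ α := by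
    apply Finset.card_le_card
    intro j hj
    rw [Finset.mem_filter]
    exact ⟨(Finset.mem_filter.mp (Finset.mem_sdiff.mp hj).1).1, hmax j hj⟩
  have hα1 : 1 ≤ α := by
    have : istar ∈ T.filter (fun j => Ry j ≤ Ry istar) :=
      Finset.mem_filter.mpr ⟨histarT, le_refl _⟩
    exact Finset.card_pos.mpr ⟨istar, this⟩
  have hαm : α ≤ T.card := Finset.card_le_card (Finset.filter_subset _ _)
  -- Claim B
  set X1 : Finset (Fin n) := (Finset.univ \ T).filter (fun j => Ry j ≤ Ry istar) with hX1
  set X2 : Finset (Fin n) := W.filter (fun j => Rv j ≤ Rv istar) with hX2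
  have hB : X1.card + X2.card ≤ Rv istar := by
    have hsub1 : X1 ⊆ Finset.univ.filter (fun j => Rv j ≤ Rv istar) := by
      intro j hj
      rw [hX1, Finset.mem_filter, Finset.mem_sdiff] at hj
      obtain ⟨⟨-, hjT⟩, hjr⟩ := hj
      rw [Finset.mem_filter]
      refine ⟨Finset.mem_univ j, ?_⟩
      rw [hRv, ← below_iff_rank_le, hv, below_coe]
      apply below_real_shift (y := y)
      · rw [hvR]; simp [hjT]
      · rw [hvR]; simp only [if_pos histarT]; linarith [le_of_not_gt hδistar]
      · rw [← below_coe (u := y), ← hvy, below_iff_rank_le]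
        exact hjr
    have hsub2 : X2 ⊆ Finset.univ.filter (fun j => Rv j ≤ Rv istar) := by
      intro j hj
      rw [hX2, Finset.mem_filter] at hj
      exact Finset.mem_filter.mpr ⟨Finset.mem_univ j, hj.2⟩
    have hdisj : Disjoint X1 X2 := by
      rw [Finset.disjoint_left]
      intro j hj1 hj2
      rw [hX1, Finset.mem_filter, Finset.mem_sdiff] at hj1
      rw [hX2, Finset.mem_filter, hW, Finset.mem_filter] at hj2
      exact hj1.1.2 hj2.1.1
    have hun : X1.card + X2.card = (X1 ∪ X2).card :=
      (Finset.card_union_of_disjoint hdisj).symm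
    have hcard : (Finset.univ.filter (fun j => Rv j ≤ Rv istar)).card = Rv istar :=
      (rank_eq_card_rank_le v istar).symm
    rw [hun, ← hcard]
    exact Finset.card_le_card (Finset.union_subset hsub1 hsub2)
  -- Claim C
  have hCC : (W.filter (fun j => ¬ Rv j ≤ Rv istar)).card + Rv istar ≤ c := by
    have h1 : (W.filter (fun j => ¬ Rv j ≤ Rv istar)).card
        ≤ (Finset.Icc (Rv istar + 1) c).card := by
      apply Finset.card_le_card_of_injOn Rv
      · intro j hj
        rw [Finset.mem_coe, Finset.mem_filter, hW, Finset.mem_filter] at hj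
        rw [Finset.mem_coe, Finset.mem_Icc]
        exact ⟨by omega, hj.1.2⟩
      · exact fun a _ b _ h => rank_injective v h
    rw [Nat.card_Icc] at h1
    omega
  have hsplitW : X2.card + (W.filter (fun j => ¬ Rv j ≤ Rv istar)).card = W.card :=
    Finset.card_filter_add_card_filter_not _
  -- Claim D
  have hDD : X1.card + α = Ry istar := by
    have h0 : Ry istar = (Finset.univ.filter (fun j => Ry j ≤ Ry istar)).card :=
      rank_eq_card_rank_le vy istar
    rw [h0, card_filter_split (fun j => Ry j ≤ Ry istar) T]
    have e1 : Finset.univ.filter (fun j => j ∈ T ∧ Ry j ≤ Ry istar)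
        = T.filter (fun j => Ry j ≤ Ry istar) := by
      ext j; simp [Finset.mem_filter]
    have e2 : Finset.univ.filter (fun j => j ∉ T ∧ Ry j ≤ Ry istar) = X1 := by
      ext j; rw [hX1]; simp [Finset.mem_filter, Finset.mem_sdiff]
    rw [e1, e2, hα]
    omega
  rcases le_or_gt α p with hcase | hcase
  · -- small α
    have h1 : W.card = WA.card + (W ∩ D).card := by
      rw [hWA]
      exact (Finset.card_sdiff_add_card_inter W D).symm
    have h2 : (W ∩ D).card ≤ D.card := Finset.card_le_card (Finset.inter_subset_right)
    omega
  · -- large α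
    have hfil : α ≤ (S.filter (· ≤ Ry istar)).card := by
      rw [hS, card_filter_rank_le]
    have hgetle : r.getD (α - 1) 0 ≤ Ry istar := by
      rw [hr]
      apply (sort_getD_le_iff S (by omega) (Ry istar)).mpr
      omega
    have hgap : r.getD p 0 + (α - 1 - p) ≤ r.getD (α - 1) 0 := by
      rw [hr]
      exact sort_getD_gap S (by omega) (by omega)
    omega

set_option maxHeartbeats 1000000 in
lemma sum_lower_bound (k : ℕ) (T : Finset (Fin n)) (y δ : Fin n → ℝ)
    (φ : ℕ → ℝ) (hφ : Monotone φ)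
    (hδ : (Finset.univ.filter fun i => 0 < δ i).card ≤ n - k) :
    (∑ t ∈ Finset.Icc 1 (min (n - k) T.card), φ t)
      + ∑ p ∈ Finset.range (T.card - min (n - k) T.card),
          φ ((Finset.sort (T.image (rankE n (fun i => ((y i : EReal))))) (· ≤ ·)).getD p 0
              + min (n - k) T.card)
      ≤ ∑ i ∈ T, φ (rankE n
            (fun j => (((y j - if j ∈ T then δ j else 0 : ℝ)) : EReal)) i) := by
  classical
  set l : ℕ := min (n - k) T.card with hl
  set m : ℕ := T.card with hm
  have hlm : l ≤ m := min_le_right _ _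
  set v : Fin n → EReal := fun j => (((y j - if j ∈ T then δ j else 0 : ℝ) : EReal)) with hv
  set Rv : Fin n → ℕ := rankE n v with hRv
  set Ry : Fin n → ℕ := rankE n (fun i => ((y i : EReal))) with hRy
  set r : List ℕ := Finset.sort (T.image Ry) (· ≤ ·) with hr
  set Sv : Finset ℕ := T.image Rv with hSv
  set Lv : List ℕ := Finset.sort Sv (· ≤ ·) with hLv
  have hSvcard : Sv.card = m := Finset.card_image_of_injective _ (rank_injective _)
  have hrycard : (T.image Ry).card = m := Finset.card_image_of_injective _ (rank_injective _)
  -- step 1 : rewrite the RHS as a sum over sorted positions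
  have hinjOn : ∀ q ∈ Finset.range m, ∀ q' ∈ Finset.range m,
      Lv.getD q 0 = Lv.getD q' 0 → q = q' := by
    intro q hq q' hq' he
    rw [Finset.mem_range] at hq hq'
    rcases lt_trichotomy q q' with h | h | h
    · exact absurd he (Nat.ne_of_lt (sort_getD_lt Sv h (by omega)))
    · exact h
    · exact absurd he.symm (Nat.ne_of_lt (sort_getD_lt Sv h (by omega)))
  have himg : (Finset.range m).image (fun q => Lv.getD q 0) = Sv := by
    apply Finset.eq_of_subset_of_card_le
    · intro x hx
      rw [Finset.mem_image] at hx
      obtain ⟨q, hq, rfl⟩ := hx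
      exact sort_getD_mem Sv (by rw [hSvcard]; exact Finset.mem_range.mp hq)
    · rw [hSvcard, Finset.card_image_of_injOn hinjOn, Finset.card_range]
  have hstep1 : ∑ i ∈ T, φ (Rv i) = ∑ q ∈ Finset.range m, φ (Lv.getD q 0) := by
    have e1 : ∑ x ∈ Sv, φ x = ∑ i ∈ T, φ (Rv i) :=
      Finset.sum_image (fun a _ b _ h => rank_injective v h)
    have e2 : ∑ x ∈ (Finset.range m).image (fun q => Lv.getD q 0), φ x
        = ∑ q ∈ Finset.range m, φ (Lv.getD q 0) := Finset.sum_image hinjOn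
    rw [← e1, ← himg, e2]
  -- step 2 : termwise bounds
  have hterm : ∀ q ∈ Finset.range m,
      (if q < l then φ (q + 1) else φ (r.getD (q - l) 0 + l)) ≤ φ (Lv.getD q 0) := by
    intro q hq
    rw [Finset.mem_range] at hq
    by_cases hql : q < l
    · rw [if_pos hql]
      apply hφ
      by_contra hcon
      push_neg at hcon
      have h1 : Lv.getD q 0 ≤ q := by omega
      have h2 := (sort_getD_le_iff Sv (by omega) q).mp h1
      rw [hSv, card_filter_rank_le] at h2
      have h3 := card_rank_le_le T v q
      omega
    · rw [if_neg hql]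
      apply hφ
      push_neg at hql
      set p : ℕ := q - l with hp
      have hpm : p < m - l := by omega
      have hrp1 : 1 ≤ r.getD p 0 := by
        have hmem : r.getD p 0 ∈ T.image Ry := by
          rw [hr] at *
          exact sort_getD_mem _ (by omega)
        rw [Finset.mem_image] at hmem
        obtain ⟨i0, -, h⟩ := hmem
        rw [← h]
        exact one_le_rank _ _
      have hcw : (T.filter (fun i => rankE n v i ≤ r.getD p 0 + l - 1)).card ≤ p + l :=
        count_W k T y δ hδ hpm
      by_contra hcon
      push_neg at hcon
      have h1 : Lv.getD q 0 ≤ r.getD p 0 + l - 1 := by omega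
      have h2 := (sort_getD_le_iff Sv (by omega) (r.getD p 0 + l - 1)).mp h1
      rw [hSv, card_filter_rank_le] at h2
      omega
  -- step 3 : the target sum equals the closed form
  have hIcc : Finset.Icc 1 l = (Finset.range l).image (· + 1) := by
    ext x
    simp only [Finset.mem_Icc, Finset.mem_image, Finset.mem_range]
    constructor
    · intro ⟨h1, h2⟩; exact ⟨x - 1, by omega, by omega⟩
    · rintro ⟨t, ht, rfl⟩; omega
  have hIco : Finset.Ico l m = (Finset.range (m - l)).image (· + l) := by
    ext x
    simp only [Finset.mem_Ico, Finset.mem_image, Finset.mem_range]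
    constructor
    · intro ⟨h1, h2⟩; exact ⟨x - l, by omega, by omega⟩
    · rintro ⟨t, ht, rfl⟩; omega
  have hsum1 : ∑ t ∈ Finset.Icc 1 l, φ t
      = ∑ q ∈ Finset.range l, (if q < l then φ (q + 1) else φ (r.getD (q - l) 0 + l)) := by
    rw [hIcc, Finset.sum_image (fun a _ b _ h => by omega)]
    apply Finset.sum_congr rfl
    intro q hq
    rw [Finset.mem_range] at hq
    rw [if_pos hq]
  have hsum2 : ∑ p ∈ Finset.range (m - l), φ (r.getD p 0 + l)
      = ∑ q ∈ Finset.Ico l m, (if q < l then φ (q + 1) else φ (r.getD (q - l) 0 + l)) := by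
    rw [hIco, Finset.sum_image (fun a _ b _ h => by omega)]
    apply Finset.sum_congr rfl
    intro p hp
    rw [if_neg (by omega), Nat.add_sub_cancel]
  have hsplit : ∑ q ∈ Finset.range m, (if q < l then φ (q + 1) else φ (r.getD (q - l) 0 + l))
      = (∑ q ∈ Finset.range l, (if q < l then φ (q + 1) else φ (r.getD (q - l) 0 + l)))
        + ∑ q ∈ Finset.Ico l m, (if q < l then φ (q + 1) else φ (r.getD (q - l) 0 + l)) := by
    rw [Finset.range_eq_Ico, ← Finset.sum_Ico_consecutive _ (Nat.zero_le l) hlm,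
      ← Finset.range_eq_Ico]
  calc (∑ t ∈ Finset.Icc 1 l, φ t) + ∑ p ∈ Finset.range (m - l), φ (r.getD p 0 + l)
      = ∑ q ∈ Finset.range m, (if q < l then φ (q + 1) else φ (r.getD (q - l) 0 + l)) := by
        rw [hsum1, hsum2, hsplit]
    _ ≤ ∑ q ∈ Finset.range m, φ (Lv.getD q 0) := Finset.sum_le_sum hterm
    _ = ∑ i ∈ T, φ (Rv i) := hstep1.symm

set_option maxHeartbeats 1000000 in
lemma attain (k : ℕ) (T Ik : Finset (Fin n)) (y : Fin n → ℝ) (hIkT : Ik ⊆ T)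
    (hIkcard : Ik.card = min (n - k) T.card) :
    ∃ δ : Fin n → ℝ, (Finset.univ.filter fun i => 0 < δ i).card ≤ n - k ∧
      ∀ i, rankE n (fun j => (((y j - if j ∈ T then δ j else 0 : ℝ)) : EReal)) i
          = rankE n (fun j => if j ∈ Ik then (⊥ : EReal) else (y j : EReal)) i := by
  classical
  set C : ℝ := (n : ℝ) + 1 + ∑ j, |y j| with hC
  set δ : Fin n → ℝ := fun i => if i ∈ Ik then y i + C - (i : ℕ) else 0 with hδdef
  have habs : ∀ i : Fin n, |y i| ≤ ∑ j, |y j| := by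
    intro i
    exact Finset.single_le_sum (f := fun j => |y j|) (fun j _ => abs_nonneg _)
      (Finset.mem_univ i)
  have hcast : ∀ i : Fin n, ((i : ℕ) : ℝ) ≤ n := by
    intro i
    have := i.isLt
    exact_mod_cast this.le
  have hpos : ∀ i ∈ Ik, 0 < δ i := by
    intro i hi
    rw [hδdef]
    simp only [if_pos hi]
    have h1 := habs i
    have h2 := hcast i
    have h3 : -y i ≤ |y i| := neg_le_abs _
    rw [hC]
    linarith
  have hfil : (Finset.univ.filter fun i => 0 < δ i) = Ik := by
    ext i
    simp only [Finset.mem_filter, Finset.mem_univ, true_and]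
    constructor
    · intro h
      by_contra hi
      rw [hδdef] at h
      simp only [if_neg hi] at h
      exact absurd h (lt_irrefl 0)
    · exact hpos i
  refine ⟨δ, by rw [hfil]; omega, ?_⟩
  -- value function after modification
  set g : Fin n → ℝ := fun j => if j ∈ Ik then ((j : ℕ) : ℝ) - C else y j with hg
  have hvg : ∀ j, (y j - if j ∈ T then δ j else 0) = g j := by
    intro j
    rw [hg, hδdef]
    by_cases hj : j ∈ Ik
    · rw [if_pos (hIkT hj)]
      simp only [if_pos hj]
      ring
    · simp only [if_neg hj]
      by_cases hjT : j ∈ T <;> simp [hjT]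
  have hlow : ∀ i ∈ Ik, ∀ j, j ∉ Ik → g i < g j := by
    intro i hi j hj
    rw [hg]
    simp only [if_pos hi, if_neg hj]
    have h1 := habs j
    have h2 := hcast i
    have h3 : -y j ≤ |y j| := neg_le_abs _
    rw [hC]
    linarith
  intro i
  rw [rankE_eq, rankE_eq]
  congr 1
  apply Finset.filter_congr
  intro j _
  have hbv : Below (fun t => (((y t - if t ∈ T then δ t else 0 : ℝ)) : EReal)) i j
      ↔ BelowR g i j := by
    rw [show (fun t => (((y t - if t ∈ T then δ t else 0 : ℝ)) : EReal))
        = (fun t => ((g t : EReal))) from funext (fun t => by rw [hvg t]), below_coe]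
  rw [hbv]
  set w : Fin n → EReal := fun t => if t ∈ Ik then (⊥ : EReal) else ((y t : EReal)) with hw
  show BelowR g i j ↔ Below w i j
  by_cases hi : i ∈ Ik <;> by_cases hj : j ∈ Ik
  · -- both in Ik
    have hgi : g i = ((i : ℕ) : ℝ) - C := by rw [hg]; simp [hi]
    have hgj : g j = ((j : ℕ) : ℝ) - C := by rw [hg]; simp [hj]
    have hwi : w i = (⊥ : EReal) := by rw [hw]; simp [hi]
    have hwj : w j = (⊥ : EReal) := by rw [hw]; simp [hj]
    unfold BelowR Below
    rw [hgi, hgj, hwi, hwj]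
    constructor
    · rintro (h | ⟨-, h⟩)
      · have h1 : ((j : ℕ) : ℝ) < ((i : ℕ) : ℝ) := by linarith
        have h2 : (j : ℕ) < (i : ℕ) := by exact_mod_cast h1
        exact Or.inr ⟨rfl, Fin.le_def.mpr h2.le⟩
      · exact Or.inr ⟨rfl, h⟩
    · rintro (h | ⟨-, h⟩)
      · exact absurd h (lt_irrefl _)
      · rcases lt_or_eq_of_le h with h' | h'
        · refine Or.inl ?_
          have h1 : (j : ℕ) < (i : ℕ) := Fin.lt_def.mp h'
          have h2 : ((j : ℕ) : ℝ) < ((i : ℕ) : ℝ) := by exact_mod_cast h1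
          linarith
        · rw [h']
          exact Or.inr ⟨rfl, le_refl _⟩
  · -- i ∈ Ik, j ∉ Ik : both false
    have hwi : w i = (⊥ : EReal) := by rw [hw]; simp [hi]
    have hwj : w j = ((y j : EReal)) := by rw [hw]; simp [hj]
    have hgij : g i < g j := hlow i hi j hj
    unfold BelowR Below
    rw [hwi, hwj]
    constructor
    · rintro (h | ⟨h, -⟩)
      · exact absurd (h.trans hgij) (lt_irrefl _)
      · exact absurd (h ▸ hgij) (lt_irrefl _)
    · rintro (h | ⟨h, -⟩)
      · exact absurd h (by simp)
      · exact absurd h (EReal.coe_ne_bot _)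
  · -- i ∉ Ik, j ∈ Ik : both true
    have hwi : w i = ((y i : EReal)) := by rw [hw]; simp [hi]
    have hwj : w j = (⊥ : EReal) := by rw [hw]; simp [hj]
    unfold BelowR Below
    rw [hwi, hwj]
    constructor
    · intro _
      exact Or.inl (EReal.bot_lt_coe _)
    · intro _
      exact Or.inl (hlow j hj i hi)
  · -- neither
    have hwi : w i = ((y i : EReal)) := by rw [hw]; simp [hi]
    have hwj : w j = ((y j : EReal)) := by rw [hw]; simp [hj]
    have hgi : g i = y i := by rw [hg]; simp [hi]
    have hgj : g j = y j := by rw [hg]; simp [hj]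
    unfold BelowR Below
    rw [hwi, hwj, hgi, hgj]
    simp [EReal.coe_lt_coe_iff, EReal.coe_eq_coe_iff]

set_option maxHeartbeats 1000000 in
/-- the infimum of the rank score statistic over the null region
`H_{k,0}` is attained by sending the effects of the treated units with the
`l = min(n−k, m)` largest outcomes to `∞`, and equals the closed form
`Σ_{i=1}^l φ(i) + Σ_{p=1}^{m−l} φ(r_p + l)`. -/
theorem stmt12 (n k : ℕ) (hk1 : 1 ≤ k) (hkn : k ≤ n)
    (T : Finset (Fin n)) (y : Fin n → ℝ) (φ : ℕ → ℝ) (hφ : Monotone φ)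
    (Ik : Finset (Fin n)) (hIkT : Ik ⊆ T)
    (hIkcard : Ik.card = min (n - k) T.card)
    (hIktop : ∀ i ∈ Ik, ∀ j ∈ T \ Ik,
      rankE n (fun i => ((y i : EReal))) j < rankE n (fun i => ((y i : EReal))) i) :
    sInf {r : ℝ | ∃ δ : Fin n → ℝ,
        (Finset.univ.filter fun i => 0 < δ i).card ≤ n - k ∧
        r = ∑ i ∈ T, φ (rankE n
              (fun j => (((y j - if j ∈ T then δ j else 0 : ℝ)) : EReal)) i)}
      = ∑ i ∈ T, φ (rankE n (fun j => if j ∈ Ik then (⊥ : EReal) else (y j : EReal)) i)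
    ∧ (∑ i ∈ T, φ (rankE n (fun j => if j ∈ Ik then (⊥ : EReal) else (y j : EReal)) i))
      = (∑ i ∈ Finset.Icc 1 (min (n - k) T.card), φ i)
        + ∑ p ∈ Finset.range (T.card - min (n - k) T.card),
            φ ((Finset.sort
                  (T.image (rankE n (fun i => ((y i : EReal))))) (· ≤ ·)).getD p 0
                + min (n - k) T.card) := by
  classical
  have hpartB : (∑ i ∈ T, φ (rankE n (fun j => if j ∈ Ik then (⊥ : EReal) else (y j : EReal)) i))
      = (∑ i ∈ Finset.Icc 1 (min (n - k) T.card), φ i)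
        + ∑ p ∈ Finset.range (T.card - min (n - k) T.card),
            φ ((Finset.sort
                  (T.image (rankE n (fun i => ((y i : EReal))))) (· ≤ ·)).getD p 0
                + min (n - k) T.card) := by
    rw [← Finset.sum_sdiff hIkT]
    have h1 : ∑ i ∈ Ik, φ (rankE n (fun j => if j ∈ Ik then (⊥ : EReal) else (y j : EReal)) i)
        = ∑ i ∈ Finset.Icc 1 (min (n - k) T.card), φ i := by
      rw [Finset.sum_congr rfl (fun i hi => by rw [rankw_mem_Ik hIkT hi]), sum_Ik φ, hIkcard]
    have h2 : ∑ i ∈ T \ Ik,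
          φ (rankE n (fun j => if j ∈ Ik then (⊥ : EReal) else (y j : EReal)) i)
        = ∑ p ∈ Finset.range (T.card - min (n - k) T.card),
            φ ((Finset.sort
                  (T.image (rankE n (fun i => ((y i : EReal))))) (· ≤ ·)).getD p 0
                + min (n - k) T.card) := by
      have e1 : ∀ i ∈ T \ Ik,
          φ (rankE n (fun j => if j ∈ Ik then (⊥ : EReal) else (y j : EReal)) i)
            = φ (rankE n (fun i => ((y i : EReal))) i + Ik.card) := by
        intro i hi
        rw [Finset.mem_sdiff] at hi
        rw [rankw_not_mem_Ik hIkT hIktop hi.1 hi.2]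
      rw [Finset.sum_congr rfl e1, sum_offIk φ hIkT hIktop, hIkcard]
    rw [h1, h2]
    ring
  refine ⟨?_, hpartB⟩
  apply IsLeast.csInf_eq
  constructor
  · -- membership : the bottom configuration is attained by a real δ
    obtain ⟨δ, hδcard, hδeq⟩ := attain k T Ik y hIkT hIkcard
    exact ⟨δ, hδcard, (Finset.sum_congr rfl (fun i _ => by rw [hδeq i])).symm⟩
  · -- lower bound
    rintro x ⟨δ, hδcard, rfl⟩
    rw [hpartB]
    exact sum_lower_bound k T y δ φ hφ hδcard
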